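/- Let (X,d) be a metric space, ℓ, n ≥ 1, p ≥ 1 a real number, a : Fin ℓ → Fin n → X a colored point configuration, and c : Fin n → X an aligned fair clustering of p-cost OPT := (Σ_{j : Fin ℓ} Σ_{t : Fin n} d(a j t, c t)^p)^{1/p}. Then there exist a color i : Fin ℓ and permutations σ j of Fin n (for each j : Fin ℓ) such that (ℓ · Σ_{t} d(a i t, c t)^p)^{1/p} ≤ OPT, and for every map Z : Fin n → X, (Σ_{j : Fin ℓ} Σ_{t : Fin n} d(a j (σ j t), Z t)^p)^{1/p} ≤ (ℓ · Σ_{t} d(a i t, Z t)^p)^{1/p} + 2·OPT. -/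

import Mathlib

open Finset in
/-- `L^p` triangle inequality for distances over a finite index set. -/
lemma lp_dist_triangle {X : Type*} [MetricSpace X] {ι : Type*} [Fintype ι] {p : ℝ} (hp : 1 ≤ p)
    (x y z : ι → X) :
    (∑ i, dist (x i) (z i) ^ p) ^ (1 / p) ≤
      (∑ i, dist (x i) (y i) ^ p) ^ (1 / p) + (∑ i, dist (y i) (z i) ^ p) ^ (1 / p) := by
  have h0 : (0:ℝ) < p := lt_of_lt_of_le one_pos hp
  calc (∑ i, dist (x i) (z i) ^ p) ^ (1 / p)
      ≤ (∑ i, (dist (x i) (y i) + dist (y i) (z i)) ^ p) ^ (1 / p) := by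
        apply Real.rpow_le_rpow (Finset.sum_nonneg fun i _ => Real.rpow_nonneg dist_nonneg _)
          _ (by positivity)
        apply Finset.sum_le_sum fun i _ =>
          Real.rpow_le_rpow dist_nonneg (dist_triangle _ _ _) h0.le
    _ ≤ _ := Real.Lp_add_le_of_nonneg Finset.univ hp
        (fun i _ => dist_nonneg) (fun i _ => dist_nonneg)

/-- Given a balanced colored point configuration `a` and an aligned fair clustering
with center map `c` of `p`-cost `OPT`, there are a color `i` and, for each color `j`,
a permutation `σ j` matching color `j` to color `i`, such that `i` is a cheap color
(`(ℓ · ∑ t, d(a i t, c t)^p)^(1/p) ≤ OPT`) and for every center map `Z`, the cost of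
assigning `a j (σ j t)` to `Z t` is at most
`(ℓ · ∑ t, d(a i t, Z t)^p)^(1/p) + 2·OPT`. -/
theorem exists_color_and_matchings {X : Type*} [MetricSpace X] {ℓ n : ℕ}
    (hℓ : 1 ≤ ℓ) (hn : 1 ≤ n) {p : ℝ} (hp : 1 ≤ p)
    (a : Fin ℓ → Fin n → X) (c : Fin n → X) :
    ∃ (i : Fin ℓ) (σ : Fin ℓ → Equiv.Perm (Fin n)),
      ((ℓ : ℝ) * ∑ t, dist (a i t) (c t) ^ p) ^ (1 / p) ≤
          (∑ j, ∑ t, dist (a j t) (c t) ^ p) ^ (1 / p) ∧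
      ∀ Z : Fin n → X,
        (∑ j, ∑ t, dist (a j (σ j t)) (Z t) ^ p) ^ (1 / p) ≤
          ((ℓ : ℝ) * ∑ t, dist (a i t) (Z t) ^ p) ^ (1 / p) +
            2 * (∑ j, ∑ t, dist (a j t) (c t) ^ p) ^ (1 / p) := by
  have h0 : (0:ℝ) < p := lt_of_lt_of_le one_pos hp
  haveI : Nonempty (Fin ℓ) := ⟨⟨0, hℓ⟩⟩
  set F : Fin ℓ → ℝ := fun j => ∑ t, dist (a j t) (c t) ^ p with hF
  obtain ⟨i, -, hi⟩ := Finset.exists_min_image Finset.univ F ⟨Classical.arbitrary _,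
    Finset.mem_univ _⟩
  have hFnonneg : ∀ j, 0 ≤ F j := fun j =>
    Finset.sum_nonneg fun t _ => Real.rpow_nonneg dist_nonneg _
  have hmin : (ℓ : ℝ) * F i ≤ ∑ j, F j := by
    have := Finset.card_nsmul_le_sum Finset.univ F (F i) (fun j _ => hi j (Finset.mem_univ j))
    simpa [nsmul_eq_mul] using this
  have hcheap : ((ℓ : ℝ) * F i) ^ (1 / p) ≤ (∑ j, F j) ^ (1 / p) :=
    Real.rpow_le_rpow (by positivity) hmin (by positivity)
  refine ⟨i, fun _ => 1, hcheap, fun Z => ?_⟩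
  set OPT : ℝ := (∑ j, F j) ^ (1 / p) with hOPT
  -- Step 1: triangle via c over the product index
  have step1 : (∑ j, ∑ t, dist (a j t) (Z t) ^ p) ^ (1 / p) ≤
      OPT + (∑ j : Fin ℓ, ∑ t, dist (c t) (Z t) ^ p) ^ (1 / p) := by
    have := lp_dist_triangle (ι := Fin ℓ × Fin n) hp
      (fun q => a q.1 q.2) (fun q => c q.2) (fun q => Z q.2)
    simpa [Fintype.sum_prod_type, hOPT, hF] using this
  have hC : (∑ j : Fin ℓ, ∑ t, dist (c t) (Z t) ^ p) =
      (ℓ : ℝ) * ∑ t, dist (c t) (Z t) ^ p := by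
    simp [Finset.sum_const]
  -- Step 2: triangle via a i on the inner sums, with factor ℓ
  have step2 : ((ℓ : ℝ) * ∑ t, dist (c t) (Z t) ^ p) ^ (1 / p) ≤
      ((ℓ : ℝ) * F i) ^ (1 / p) + ((ℓ : ℝ) * ∑ t, dist (a i t) (Z t) ^ p) ^ (1 / p) := by
    have hℓ0 : (0:ℝ) ≤ (ℓ : ℝ) := Nat.cast_nonneg _
    have htri := lp_dist_triangle (ι := Fin n) hp c (a i) Z
    have h1 : ∀ (s : ℝ), 0 ≤ s → ((ℓ : ℝ) * s) ^ (1 / p) = (ℓ:ℝ) ^ (1/p) * s ^ (1/p) :=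
      fun s hs => Real.mul_rpow hℓ0 hs
    rw [h1 _ (Finset.sum_nonneg fun t _ => Real.rpow_nonneg dist_nonneg _),
      h1 _ (hFnonneg i), h1 _ (Finset.sum_nonneg fun t _ => Real.rpow_nonneg dist_nonneg _),
      ← mul_add]
    apply mul_le_mul_of_nonneg_left _ (Real.rpow_nonneg hℓ0 _)
    calc (∑ t, dist (c t) (Z t) ^ p) ^ (1 / p)
        ≤ (∑ t, dist (c t) (a i t) ^ p) ^ (1 / p) + (∑ t, dist (a i t) (Z t) ^ p) ^ (1/p) := htri
      _ = (F i) ^ (1/p) + (∑ t, dist (a i t) (Z t) ^ p) ^ (1/p) := by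
          simp [hF, dist_comm]
  calc (∑ j, ∑ t, dist (a j ((1 : Equiv.Perm (Fin n)) t)) (Z t) ^ p) ^ (1 / p)
      = (∑ j, ∑ t, dist (a j t) (Z t) ^ p) ^ (1 / p) := by simp
    _ ≤ OPT + (∑ j : Fin ℓ, ∑ t, dist (c t) (Z t) ^ p) ^ (1 / p) := step1
    _ ≤ OPT + (((ℓ : ℝ) * F i) ^ (1 / p) + ((ℓ : ℝ) * ∑ t, dist (a i t) (Z t) ^ p) ^ (1 / p)) := by
        rw [hC]; exact add_le_add_right step2 _
    _ ≤ OPT + (OPT + ((ℓ : ℝ) * ∑ t, dist (a i t) (Z t) ^ p) ^ (1 / p)) := by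
        exact add_le_add_right (add_le_add_left hcheap _) _
    _ = ((ℓ : ℝ) * ∑ t, dist (a i t) (Z t) ^ p) ^ (1 / p) + 2 * OPT := by ring
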